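/- If p is a real number with |1 - 2p| ≤ 1 and p within distance ν/4 + C/N of 1/2·(1 - sin(π a/4)) for a ∈ [-1,1], and if ν and 1/N are small enough that |1 - 2p| ≤ 3/4, then |a - (4/π)·arcsin(1 - 2p)| ≤ ν + C'/N for some constant C' depending only on C. -/

import Mathlib

open Real Set

lemma arcsin_lip {x y : ℝ} (hx : |x| ≤ 3/4) (hy : |y| ≤ 3/4) :
    |Real.arcsin x - Real.arcsin y| ≤ π / 2 * |x - y| := by
  have hpi := Real.pi_gt_d6
  have key : ∀ z ∈ Icc (-(3/4) : ℝ) (3/4),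
      HasDerivWithinAt Real.arcsin (1 / Real.sqrt (1 - z ^ 2)) (Icc (-(3/4) : ℝ) (3/4)) z := by
    intro z hz
    simp only [mem_Icc] at hz
    exact (Real.hasDerivAt_arcsin (by linarith [hz.1]) (by linarith [hz.2])).hasDerivWithinAt
  have bound : ∀ z ∈ Icc (-(3/4) : ℝ) (3/4), ‖(1 / Real.sqrt (1 - z ^ 2) : ℝ)‖ ≤ π / 2 := by
    intro z hz
    simp only [mem_Icc] at hz
    have h1 : (7:ℝ)/16 ≤ 1 - z ^ 2 := by nlinarith [hz.1, hz.2]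
    have h2 : Real.sqrt (1 - z ^ 2) ≥ 2 / π := by
      rw [ge_iff_le, show (2:ℝ)/π = Real.sqrt ((2/π)^2) from
        (Real.sqrt_sq (by positivity)).symm]
      apply Real.sqrt_le_sqrt
      rw [div_pow]
      rw [div_le_iff₀ (by positivity)]
      nlinarith
    have h3 : (0:ℝ) < Real.sqrt (1 - z ^ 2) := lt_of_lt_of_le (by positivity) h2
    rw [Real.norm_eq_abs, abs_of_nonneg (by positivity), div_le_iff₀ h3]
    calc (1:ℝ) = π/2 * (2/π) := by field_simp
    _ ≤ π/2 * Real.sqrt (1 - z^2) := by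
        apply mul_le_mul_of_nonneg_left h2 (by positivity)
  have hxm : x ∈ Icc (-(3/4) : ℝ) (3/4) := by
    rw [mem_Icc]; constructor <;> [linarith [neg_abs_le x]; linarith [le_abs_self x]]
  have hym : y ∈ Icc (-(3/4) : ℝ) (3/4) := by
    rw [mem_Icc]; constructor <;> [linarith [neg_abs_le y]; linarith [le_abs_self y]]
  have := (convex_Icc (-(3/4) : ℝ) (3/4)).norm_image_sub_le_of_norm_hasDerivWithin_le
    key bound hym hxm
  simpa [Real.norm_eq_abs] using this

/-- Quantitative single-operator estimation bound: if `p` is within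
`ν/4 + C/N` of `1/2 (1 - sin (πa/4))` and `|1-2p| ≤ 3/4`, then
`(4/π) arcsin (1-2p)` estimates `a` within `ν + C'/N`, for some constant `C'`
depending only on `C`. -/
theorem stmt_18 (C : ℝ) (hC : 0 < C) :
    ∃ C' : ℝ, 0 < C' ∧
      ∀ (N : ℕ) (a p ν : ℝ), 0 < N → 0 ≤ ν → a ∈ Set.Icc (-1 : ℝ) 1 →
        |1 - 2 * p| ≤ 1 →
        |p - 1/2 * (1 - Real.sin (Real.pi * a / 4))| ≤ ν / 4 + C / N →
        |1 - 2 * p| ≤ 3/4 →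
        |a - (4 / Real.pi) * Real.arcsin (1 - 2 * p)| ≤ ν + C' / N := by
  have hpi := Real.pi_gt_d6
  have hpi0 : (0:ℝ) < π := by linarith
  refine ⟨4 * C, by linarith, ?_⟩
  intro N a p ν hN hν ha h1 h2 h3
  obtain ⟨ha1, ha2⟩ := ha
  set x := Real.sin (π * a / 4) with hxdef
  set y := (1 - 2 * p) with hydef
  -- bound on |x|
  have hrange : π * a / 4 ∈ Icc (-(π/2)) (π/2) := by
    constructor <;> nlinarith
  have hx34 : |x| ≤ 3/4 := by
    have hsin1 : x ≤ Real.sin (π/4) := by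
      apply Real.strictMonoOn_sin.monotoneOn hrange
      · constructor <;> nlinarith
      · nlinarith
    have hsin2 : Real.sin (-(π/4)) ≤ x := by
      apply Real.strictMonoOn_sin.monotoneOn _ hrange
      · nlinarith
      · constructor <;> nlinarith
    rw [Real.sin_neg] at hsin2
    have hs4 : Real.sin (π/4) ≤ 3/4 := by
      rw [Real.sin_pi_div_four]
      rw [div_le_iff₀ (by norm_num : (0:ℝ) < 2)]
      nlinarith [Real.sq_sqrt (by norm_num : (2:ℝ) ≥ 0), Real.sqrt_nonneg 2]
    rw [abs_le]; constructor <;> linarith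
  -- identity a = (4/π) arcsin x
  have hid : (4 / π) * Real.arcsin x = a := by
    rw [hxdef, Real.arcsin_sin hrange.1 hrange.2]
    field_simp
  -- distance |x - y| ≤ ν/2 + 2C/N
  have hdist : |x - y| ≤ ν / 2 + 2 * C / N := by
    have : x - y = 2 * (p - 1/2 * (1 - x)) := by rw [hydef]; ring
    rw [this, abs_mul, abs_two]
    calc 2 * |p - 1/2 * (1 - x)| ≤ 2 * (ν/4 + C/N) := by linarith [h2]
    _ = ν / 2 + 2 * C / N := by ring
  have hlip := arcsin_lip hx34 h3
  have hN1 : (1:ℝ) ≤ N := by exact_mod_cast hN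
  have hNpos : (0:ℝ) < N := by linarith
  calc |a - (4 / π) * Real.arcsin y|
      = |(4/π) * (Real.arcsin x - Real.arcsin y)| := by rw [← hid]; ring_nf
    _ = (4/π) * |Real.arcsin x - Real.arcsin y| := by
        rw [abs_mul, abs_of_nonneg (by positivity)]
    _ ≤ (4/π) * (π/2 * |x - y|) := by
        apply mul_le_mul_of_nonneg_left hlip (by positivity)
    _ = 2 * |x - y| := by field_simp; ring
    _ ≤ 2 * (ν/2 + 2*C/N) := by linarith
    _ = ν + 4 * C / N := by ring
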